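/- Let S = K[x_1, …, x_n] with n ≥ 2, let ℓ_1, …, ℓ_n and m be positive integers, and let Ω = ⋂_{k=1}^n (x_1^{ℓ_1}, …, x_{k−1}^{ℓ_{k−1}}, x_{k+1}^{ℓ_{k+1}}, …, x_n^{ℓ_n}) and Γ = ⋂_{k=1}^n (x_1^{ℓ_1}, …, x_{k−1}^{ℓ_{k−1}}, x_{k+1}^{ℓ_{k+1}}, …, x_n^{ℓ_n})^m. Then Γ equals the m-th symbolic power Ω^(m) of Ω. -/

import Mathlib

open MvPolynomial

/-- The `m`-th symbolic power of an ideal `N` of a commutative ring `T`: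
`N^(m) = ⋂_{𝔭 ∈ Ass(T/N)} φ_𝔭⁻¹(N^m T_𝔭)`. -/
noncomputable def symbolicPower {T : Type} [CommRing T] (N : Ideal T) (m : ℕ) : Ideal T :=
  ⨅ (p : Ideal T) (h : p.IsPrime ∧ ∃ x : T ⧸ N, p = (Submodule.span T {x}).annihilator),
    haveI : p.IsPrime := h.1
    (Ideal.map (algebraMap T (Localization.AtPrime p)) (N ^ m)).comap
      (algebraMap T (Localization.AtPrime p))

namespace SymbAux

variable {K : Type} [Field K] {n : ℕ}

/-- The ideal `(x_j^{ℓ_j} : j ≠ k)`. -/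
noncomputable def Qk (ℓ : Fin n → ℕ) (k : Fin n) : Ideal (MvPolynomial (Fin n) K) :=
  Ideal.span ((fun j : Fin n => (X j : MvPolynomial (Fin n) K) ^ ℓ j) '' {j | j ≠ k})

/-- The prime `(x_j : j ≠ k)`. -/
noncomputable def Pk (k : Fin n) : Ideal (MvPolynomial (Fin n) K) :=
  Ideal.span ((fun j : Fin n => (X j : MvPolynomial (Fin n) K)) '' {j | j ≠ k})

/-- Evaluation killing all variables except `x_k`, into `K[X]`. -/
noncomputable def ρ (K : Type) [Field K] {n : ℕ} (k : Fin n) :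
    MvPolynomial (Fin n) K →ₐ[K] Polynomial K :=
  aeval (fun j => if j = k then Polynomial.X else 0)

/-- The inclusion `K[X] → S` sending `X ↦ x_k`. -/
noncomputable def ψ (K : Type) [Field K] {n : ℕ} (k : Fin n) :
    Polynomial K →ₐ[K] MvPolynomial (Fin n) K :=
  Polynomial.aeval (X k)

variable {k : Fin n} {ℓ : Fin n → ℕ}

theorem sub_psi_rho_mem (k : Fin n) (g : MvPolynomial (Fin n) K) :
    g - ψ K k (ρ K k g) ∈ Pk k := by
  have h : (Ideal.Quotient.mkₐ K (Pk (K := K) k)).comp ((ψ K k).comp (ρ K k))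
      = Ideal.Quotient.mkₐ K (Pk k) := by
    apply MvPolynomial.algHom_ext
    intro j
    by_cases hj : j = k
    · subst hj
      simp [ρ, ψ]
    · have hX : (X j : MvPolynomial (Fin n) K) ∈ Pk k :=
        Ideal.subset_span ⟨j, hj, rfl⟩
      simp [ρ, ψ, hj, (Ideal.Quotient.eq_zero_iff_mem).mpr hX]
  have h2 := DFunLike.congr_fun h g
  simp only [AlgHom.coe_comp, Function.comp_apply, Ideal.Quotient.mkₐ_eq_mk] at h2
  exact (Ideal.Quotient.eq).mp h2.symm


theorem Pk_eq_ker (k : Fin n) : Pk (K := K) k = RingHom.ker (ρ K k) := by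
  apply le_antisymm
  · rw [Pk, Ideal.span_le]
    rintro _ ⟨j, hj, rfl⟩
    have hj' : j ≠ k := hj
    simp [RingHom.mem_ker, ρ, hj']
  · intro g hg
    rw [RingHom.mem_ker] at hg
    have := sub_psi_rho_mem k g
    rwa [hg, map_zero, sub_zero] at this

theorem Pk_isPrime (k : Fin n) : (Pk (K := K) k).IsPrime := by
  rw [Pk_eq_ker]
  exact RingHom.ker_isPrime _

theorem X_k_not_mem_Pk (k : Fin n) : (X k : MvPolynomial (Fin n) K) ∉ Pk k := by
  rw [Pk_eq_ker, RingHom.mem_ker, ρ]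
  simp

theorem Qk_le_Pk (hℓ : ∀ j, 0 < ℓ j) (k : Fin n) : Qk ℓ k ≤ Pk (K := K) k := by
  rw [Qk, Ideal.span_le]
  rintro _ ⟨j, hj, rfl⟩
  have hX : (X j : MvPolynomial (Fin n) K) ∈ Pk k := by
    rw [Pk]; exact Ideal.subset_span ⟨j, hj, rfl⟩
  exact Ideal.pow_mem_of_mem _ hX _ (hℓ j)

theorem radical_Qk (hℓ : ∀ j, 0 < ℓ j) (k : Fin n) :
    (Qk ℓ k : Ideal (MvPolynomial (Fin n) K)).radical = Pk k := by
  apply le_antisymm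
  · rw [← (Pk_isPrime (K := K) k).radical]
    exact Ideal.radical_mono (Qk_le_Pk hℓ k)
  · rw [Pk, Ideal.span_le]
    rintro _ ⟨j, hj, rfl⟩
    have hx : (X j : MvPolynomial (Fin n) K) ^ ℓ j ∈ Qk ℓ k := by
      rw [Qk]; exact Ideal.subset_span ⟨j, hj, rfl⟩
    exact Ideal.mem_radical_of_pow_mem (Ideal.le_radical hx)

theorem radical_Qk_pow (hℓ : ∀ j, 0 < ℓ j) {m : ℕ} (hm : 0 < m) (k : Fin n) :
    ((Qk ℓ k : Ideal (MvPolynomial (Fin n) K)) ^ m).radical = Pk k := by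
  rw [Ideal.radical_pow _ hm.ne', radical_Qk hℓ k]


/-- Multiplication by (the image of) a nonzero polynomial over the field `K` is injective
on `A[X]` for any `K`-algebra `A`. -/
theorem map_regular {A : Type} [CommRing A] [Algebra K A] {G : Polynomial K} (hG : G ≠ 0)
    {p : Polynomial A} (h : p * G.map (algebraMap K A) = 0) : p = 0 := by
  have hmon : (G * Polynomial.C G.leadingCoeff⁻¹).Monic :=
    Polynomial.monic_mul_leadingCoeff_inv hG
  have hmap : ((G * Polynomial.C G.leadingCoeff⁻¹).map (algebraMap K A)).Monic :=
    hmon.map _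
  have h0 : p * (G * Polynomial.C G.leadingCoeff⁻¹).map (algebraMap K A) = 0 := by
    rw [Polynomial.map_mul, Polynomial.map_C, ← mul_assoc, h, zero_mul]
  exact hmap.mul_left_eq_zero_iff.mp h0

/-- Mod out by an extended ideal `I·A[X]`: multiplication by the image of a nonzero
`G ∈ K[X]` is injective modulo `I·A[X]`. -/
theorem map_regular_mod {A : Type} [CommRing A] [Algebra K A] (I : Ideal A)
    {G : Polynomial K} (hG : G ≠ 0) {p : Polynomial A}
    (h : p * G.map (algebraMap K A) ∈ I.map (Polynomial.C (R := A))) :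
    p ∈ I.map (Polynomial.C (R := A)) := by
  have hker := Polynomial.ker_mapRingHom (Ideal.Quotient.mk I)
  rw [Ideal.mk_ker] at hker
  rw [← hker, RingHom.mem_ker] at h ⊢
  rw [map_mul] at h
  have hGmap : (Polynomial.mapRingHom (Ideal.Quotient.mk I)) (G.map (algebraMap K A))
      = G.map (algebraMap K (A ⧸ I)) := by
    rw [Polynomial.coe_mapRingHom, Polynomial.map_map, ← Ideal.Quotient.algebraMap_eq,
      ← IsScalarTower.algebraMap_eq]
  rw [hGmap] at h
  exact map_regular hG h


/-- `S ≃ R[X]` with `R = K[x_j : j ≠ k]`, sending `x_k` to `X`. -/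
noncomputable def eqv (K : Type) [Field K] {n : ℕ} (k : Fin n) :
    MvPolynomial (Fin n) K ≃ₐ[K] Polynomial (MvPolynomial {j : Fin n // j ≠ k} K) :=
  (renameEquiv K (Equiv.optionSubtypeNe k).symm).trans
    (optionEquivLeft K {j : Fin n // j ≠ k})

theorem eqv_X_self (k : Fin n) : eqv K k (X k) = Polynomial.X := by
  simp [eqv, renameEquiv_apply, rename_X, Equiv.optionSubtypeNe_symm_self,
    optionEquivLeft_X_none]

theorem eqv_X_ne {j : Fin n} (hj : j ≠ k) :
    eqv K k (X j) = Polynomial.C (X ⟨j, hj⟩) := by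
  simp [eqv, renameEquiv_apply, rename_X, Equiv.optionSubtypeNe_symm_of_ne hj,
    optionEquivLeft_X_some]

theorem eqv_psi (k : Fin n) (G : Polynomial K) :
    eqv K k (ψ K k G)
      = G.map (algebraMap K (MvPolynomial {j : Fin n // j ≠ k} K)) := by
  have h : ((eqv K k).toAlgHom.comp (ψ K k))
      = Polynomial.mapAlgHom (Algebra.ofId K (MvPolynomial {j : Fin n // j ≠ k} K)) := by
    apply Polynomial.algHom_ext
    simp [ψ, Polynomial.mapAlgHom, eqv_X_self]
  have := DFunLike.congr_fun h G
  simpa [Polynomial.mapAlgHom, Algebra.ofId] using this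

/-- The corresponding ideal downstairs. -/
noncomputable def Jk (ℓ : Fin n → ℕ) (k : Fin n) :
    Ideal (MvPolynomial {j : Fin n // j ≠ k} K) :=
  Ideal.span (Set.range fun j : {j : Fin n // j ≠ k} =>
    (X j : MvPolynomial {j : Fin n // j ≠ k} K) ^ ℓ j)

theorem map_eqv_Qk (ℓ : Fin n → ℕ) (k : Fin n) :
    Ideal.map ((eqv K k).toRingEquiv) (Qk ℓ k)
      = Ideal.map (Polynomial.C) (Jk (K := K) ℓ k) := by
  rw [Qk, Jk, Ideal.map_span, Ideal.map_span]
  congr 1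
  ext p
  constructor
  · rintro ⟨_, ⟨j, hj, rfl⟩, rfl⟩
    refine ⟨X ⟨j, hj⟩ ^ ℓ j, ⟨⟨j, hj⟩, by simp only⟩, ?_⟩
    show Polynomial.C (X ⟨j, hj⟩ ^ ℓ j) = eqv K k (X j ^ ℓ j)
    simp [map_pow, eqv_X_ne hj]
  · rintro ⟨_, ⟨⟨j, hj⟩, rfl⟩, rfl⟩
    refine ⟨X j ^ ℓ j, ⟨j, hj, rfl⟩, ?_⟩
    show eqv K k (X j ^ ℓ j) = Polynomial.C (X ⟨j, hj⟩ ^ ℓ j)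
    simp [map_pow, eqv_X_ne hj]

/-- Key cancellation: if `f * ψ(G) ∈ Qk^m` with `G ≠ 0`, then `f ∈ Qk^m`. -/
theorem mem_pow_of_mul_psi_mem {m : ℕ} {f : MvPolynomial (Fin n) K}
    {G : Polynomial K} (hG : G ≠ 0) (h : f * ψ K k G ∈ Qk ℓ k ^ m) :
    f ∈ Qk ℓ k ^ m := by
  set re := (eqv K k).toRingEquiv with hre
  have hmap : Ideal.map re (Qk ℓ k ^ m)
      = Ideal.map (Polynomial.C) (Jk (K := K) ℓ k ^ m) := by
    rw [Ideal.map_pow, Ideal.map_pow, map_eqv_Qk]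
  have h1 : re (f * ψ K k G) ∈ Ideal.map re (Qk ℓ k ^ m) :=
    Ideal.mem_map_of_mem _ h
  rw [hmap] at h1
  have h2 : re f * G.map (algebraMap K (MvPolynomial {j : Fin n // j ≠ k} K))
      ∈ Ideal.map (Polynomial.C) (Jk (K := K) ℓ k ^ m) := by
    have : re (f * ψ K k G) = re f * G.map (algebraMap K _) := by
      rw [map_mul]
      congr 1
      exact eqv_psi k G
    rwa [this] at h1
  have h3 := map_regular_mod (Jk (K := K) ℓ k ^ m) hG h2
  rw [← hmap] at h3
  rwa [← Ideal.apply_mem_of_equiv_iff (f := re)]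


/-- `Qk^m` is primary: the key implication. -/
theorem Qk_pow_primary_step (hℓ : ∀ j, 0 < ℓ j) {m : ℕ} (hm : 0 < m)
    {f g : MvPolynomial (Fin n) K} (hfg : f * g ∈ Qk ℓ k ^ m) (hg : g ∉ Pk k) :
    f ∈ Qk ℓ k ^ m := by
  obtain ⟨N, hN⟩ := Ideal.exists_radical_pow_le_of_fg (Qk (K := K) ℓ k ^ m)
    (IsNoetherian.noetherian _)
  rw [radical_Qk_pow hℓ hm k] at hN
  set G := ρ K k g with hGdef
  have hG : G ≠ 0 := by
    intro h0
    exact hg (by rw [Pk_eq_ker, RingHom.mem_ker]; exact h0)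
  set g₀ := ψ K k G with hg0
  have hg₁ : g - g₀ ∈ Pk k := sub_psi_rho_mem k g
  have key : ∀ t : ℕ,
      f * g₀ ^ t - (-1 : MvPolynomial (Fin n) K) ^ t * (f * (g - g₀) ^ t) ∈ Qk ℓ k ^ m := by
    intro t
    induction t with
    | zero => simpa using (Qk (K := K) ℓ k ^ m).zero_mem
    | succ t ih =>
      have h1 : (f * g₀ ^ t - (-1 : MvPolynomial (Fin n) K) ^ t * (f * (g - g₀) ^ t)) * g₀
          ∈ Qk ℓ k ^ m := Ideal.mul_mem_right _ _ ih
      have h2 : ((-1 : MvPolynomial (Fin n) K) ^ t * (g - g₀) ^ t) * (f * g) ∈ Qk ℓ k ^ m :=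
        Ideal.mul_mem_left _ _ hfg
      have heq : f * g₀ ^ (t + 1)
          - (-1 : MvPolynomial (Fin n) K) ^ (t + 1) * (f * (g - g₀) ^ (t + 1))
          = (f * g₀ ^ t - (-1 : MvPolynomial (Fin n) K) ^ t * (f * (g - g₀) ^ t)) * g₀
            + ((-1 : MvPolynomial (Fin n) K) ^ t * (g - g₀) ^ t) * (f * g) := by
        ring
      rw [heq]
      exact Ideal.add_mem _ h1 h2
  have hterm : (-1 : MvPolynomial (Fin n) K) ^ N * (f * (g - g₀) ^ N) ∈ Qk ℓ k ^ m := by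
    have : (g - g₀) ^ N ∈ Qk ℓ k ^ m := hN (Ideal.pow_mem_pow hg₁ N)
    exact Ideal.mul_mem_left _ _ (Ideal.mul_mem_left _ _ this)
  have hfg0 : f * g₀ ^ N ∈ Qk ℓ k ^ m := by
    have := Ideal.add_mem _ (key N) hterm
    simpa using this
  have hpsi : f * ψ K k (G ^ N) ∈ Qk ℓ k ^ m := by
    rwa [map_pow]
  exact mem_pow_of_mul_psi_mem (pow_ne_zero N hG) hpsi

theorem Qk_pow_isPrimary (hℓ : ∀ j, 0 < ℓ j) {m : ℕ} (hm : 0 < m) (k : Fin n) :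
    ((Qk (K := K) ℓ k) ^ m).IsPrimary := by
  refine Ideal.isPrimary_iff.mpr ⟨?_, ?_⟩
  · intro htop
    have hPk : (Pk (K := K) k) = ⊤ := by
      rw [← radical_Qk_pow hℓ hm k, htop, Ideal.radical_top]
    exact (Pk_isPrime (K := K) k).ne_top hPk
  · intro x y hxy
    by_cases hy : y ∈ Pk (K := K) k
    · right
      rw [radical_Qk_pow hℓ hm k]
      exact hy
    · left
      exact Qk_pow_primary_step hℓ hm hxy hy


section Localization

variable (hℓ : ∀ j, 0 < ℓ j) {m : ℕ}

theorem comap_map_Qk_pow [inst : (Pk (K := K) k).IsPrime] (hℓ : ∀ j, 0 < ℓ j) (hm : 0 < m) :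
    Ideal.comap (algebraMap (MvPolynomial (Fin n) K) (Localization.AtPrime (Pk (K := K) k)))
      (Ideal.map (algebraMap (MvPolynomial (Fin n) K) (Localization.AtPrime (Pk (K := K) k)))
        (Qk ℓ k ^ m)) = Qk ℓ k ^ m := by
  apply le_antisymm
  · intro x hx
    rw [Ideal.mem_comap,
      IsLocalization.mem_map_algebraMap_iff (Pk (K := K) k).primeCompl] at hx
    obtain ⟨⟨⟨a, ha⟩, s⟩, hx⟩ := hx
    rw [← map_mul] at hx
    obtain ⟨c, hc⟩ := (IsLocalization.eq_iff_exists (Pk (K := K) k).primeCompl _).mp hx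
    have hmem : x * (↑s * ↑c) ∈ Qk ℓ k ^ m := by
      have h1 : (↑c : MvPolynomial (Fin n) K) * a ∈ Qk ℓ k ^ m := Ideal.mul_mem_left _ _ ha
      rw [← hc] at h1
      convert h1 using 1
      ring
    have hs : (↑s * ↑c : MvPolynomial (Fin n) K) ∉ Pk k :=
      Submonoid.mul_mem _ s.2 c.2
    exact Qk_pow_primary_step hℓ hm hmem hs
  · exact Ideal.le_comap_map

theorem map_Qk_le_map_iInf [inst : (Pk (K := K) k).IsPrime] (hℓ : ∀ j, 0 < ℓ j) :
    Ideal.map (algebraMap (MvPolynomial (Fin n) K) (Localization.AtPrime (Pk (K := K) k))) (Qk ℓ k)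
      ≤ Ideal.map (algebraMap (MvPolynomial (Fin n) K) (Localization.AtPrime (Pk (K := K) k)))
        (⨅ j, Qk ℓ j) := by
  set φ := algebraMap (MvPolynomial (Fin n) K) (Localization.AtPrime (Pk (K := K) k)) with hφ
  have htop : ∀ j : Fin n, j ≠ k → Ideal.map φ (Qk ℓ j) = ⊤ := by
    intro j hj
    have hXk : (X k : MvPolynomial (Fin n) K) ^ ℓ k ∈ Qk ℓ j := by
      rw [Qk]
      exact Ideal.subset_span ⟨k, fun h => hj (h : (k : Fin n) = j).symm, rfl⟩
    have hXk_not : (X k : MvPolynomial (Fin n) K) ^ ℓ k ∈ (Pk (K := K) k).primeCompl := by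
      intro hin
      exact X_k_not_mem_Pk k (inst.mem_of_pow_mem _ hin)
    have hunit : IsUnit (φ ((X k : MvPolynomial (Fin n) K) ^ ℓ k)) :=
      IsLocalization.map_units _ (⟨_, hXk_not⟩ : (Pk (K := K) k).primeCompl)
    exact Ideal.eq_top_of_isUnit_mem _ (Ideal.mem_map_of_mem _ hXk) hunit
  have hprodeq : (∏ j : Fin n, Ideal.map φ (Qk ℓ j)) = Ideal.map φ (Qk ℓ k) := by
    refine Finset.prod_eq_single_of_mem k (Finset.mem_univ k) ?_
    intro j _ hj
    rw [htop j hj]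
    exact Ideal.one_eq_top.symm
  have hmapprod : Ideal.map φ (∏ j : Fin n, Qk ℓ j) = ∏ j : Fin n, Ideal.map φ (Qk ℓ j) :=
    map_prod (Ideal.mapHom φ) _ _
  have hle : (∏ j : Fin n, Qk (K := K) ℓ j) ≤ ⨅ j, Qk ℓ j := by
    refine le_iInf fun j => le_trans Ideal.prod_le_inf (Finset.inf_le (Finset.mem_univ j))
  calc Ideal.map φ (Qk ℓ k) = Ideal.map φ (∏ j : Fin n, Qk ℓ j) := by
        rw [hmapprod, hprodeq]
    _ ≤ Ideal.map φ (⨅ j, Qk ℓ j) := Ideal.map_mono hle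

theorem map_omega_pow [inst : (Pk (K := K) k).IsPrime] (hℓ : ∀ j, 0 < ℓ j) (m : ℕ) :
    Ideal.map (algebraMap (MvPolynomial (Fin n) K) (Localization.AtPrime (Pk (K := K) k)))
        ((⨅ j, Qk ℓ j) ^ m)
      = Ideal.map (algebraMap (MvPolynomial (Fin n) K) (Localization.AtPrime (Pk (K := K) k)))
        (Qk ℓ k ^ m) := by
  rw [Ideal.map_pow, Ideal.map_pow]
  apply le_antisymm
  · exact pow_le_pow_left' (Ideal.map_mono (iInf_le _ k)) m
  · exact pow_le_pow_left' (map_Qk_le_map_iInf hℓ) m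

end Localization


section Ass

theorem mem_ann_iff {I : Ideal (MvPolynomial (Fin n) K)} {f r : MvPolynomial (Fin n) K} :
    r ∈ (Submodule.span (MvPolynomial (Fin n) K)
      {(Ideal.Quotient.mk I f : MvPolynomial (Fin n) K ⧸ I)}).annihilator ↔ r * f ∈ I := by
  rw [Submodule.mem_annihilator_span_singleton,
    ← Ideal.Quotient.mkₐ_eq_mk (MvPolynomial (Fin n) K), ← map_smul, smul_eq_mul,
    Ideal.Quotient.mkₐ_eq_mk, ← Ideal.Quotient.mk_eq_mk, Submodule.Quotient.mk_eq_zero]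

theorem Qk_span_monomial (ℓ : Fin n → ℕ) (k : Fin n) :
    Qk (K := K) ℓ k = Ideal.span ((fun s => monomial s (1 : K)) ''
      ((fun j : Fin n => Finsupp.single j (ℓ j)) '' {j | j ≠ k})) := by
  rw [Qk, Set.image_image]
  congr 1
  apply Set.image_congr
  intro j _
  rw [X_pow_eq_monomial]

/-- The witness monomial: `x_k^{ℓ_k} ∏_{j ≠ k} x_j^{ℓ_j - 1}`. -/
noncomputable def dd (ℓ : Fin n → ℕ) (k : Fin n) : Fin n →₀ ℕ :=
  Finsupp.equivFunOnFinite.symm (fun j => if j = k then ℓ k else ℓ j - 1)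

theorem dd_apply (ℓ : Fin n → ℕ) (k j : Fin n) :
    dd ℓ k j = if j = k then ℓ k else ℓ j - 1 := rfl

theorem witness_mem (hℓ : ∀ j, 0 < ℓ j) {j : Fin n} (hj : j ≠ k) :
    (monomial (dd ℓ k) (1 : K)) ∈ Qk ℓ j := by
  have hgen : (X k : MvPolynomial (Fin n) K) ^ ℓ k ∈ Qk ℓ j := by
    rw [Qk]
    exact Ideal.subset_span ⟨k, fun h => hj (h : (k : Fin n) = j).symm, rfl⟩
  have hdvd : (X k : MvPolynomial (Fin n) K) ^ ℓ k ∣ monomial (dd ℓ k) 1 := by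
    rw [X_pow_eq_monomial]
    rw [monomial_dvd_monomial]
    refine ⟨Or.inr ?_, dvd_refl 1⟩
    rw [Finsupp.single_le_iff, dd_apply, if_pos rfl]
  obtain ⟨t, ht⟩ := hdvd
  rw [ht]
  exact Ideal.mul_mem_right _ _ hgen

theorem witness_not_mem (hℓ : ∀ j, 0 < ℓ j) (k : Fin n) :
    (monomial (dd ℓ k) (1 : K)) ∉ Qk ℓ k := by
  classical
  rw [Qk_span_monomial, mem_ideal_span_monomial_image]
  intro h
  have hd : dd ℓ k ∈ (monomial (dd ℓ k) (1 : K)).support := by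
    rw [support_monomial, if_neg (one_ne_zero)]
    exact Finset.mem_singleton_self _
  obtain ⟨s, hs, hle⟩ := h (dd ℓ k) hd
  obtain ⟨j, hj, rfl⟩ := hs
  have hj' : j ≠ k := hj
  have h1 := (Finsupp.single_le_iff).mp hle
  rw [dd_apply, if_neg hj'] at h1
  have h0 := hℓ j
  omega

theorem X_mul_witness_mem (hℓ : ∀ j, 0 < ℓ j) {j : Fin n} (hj : j ≠ k) :
    (X j : MvPolynomial (Fin n) K) * monomial (dd ℓ k) 1 ∈ Qk ℓ k := by
  have hgen : (X j : MvPolynomial (Fin n) K) ^ ℓ j ∈ Qk ℓ k := by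
    rw [Qk]
    exact Ideal.subset_span ⟨j, hj, rfl⟩
  have hdvd : (X j : MvPolynomial (Fin n) K) ^ ℓ j ∣ X j * monomial (dd ℓ k) 1 := by
    rw [X_pow_eq_monomial, ← pow_one (X j : MvPolynomial (Fin n) K), ← monomial_single_add,
      monomial_dvd_monomial]
    refine ⟨Or.inr ?_, dvd_refl 1⟩
    classical
    rw [Finsupp.single_le_iff, Finsupp.add_apply, dd_apply, if_neg hj, Finsupp.single_apply,
      if_pos rfl]
    have := hℓ j
    omega
  obtain ⟨t, ht⟩ := hdvd
  rw [ht]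
  exact Ideal.mul_mem_right _ _ hgen

theorem Pk_mem_ass (hℓ : ∀ j, 0 < ℓ j) (k : Fin n) :
    (Pk (K := K) k).IsPrime ∧ ∃ x : MvPolynomial (Fin n) K ⧸ (⨅ j, Qk (K := K) ℓ j),
      Pk (K := K) k = (Submodule.span (MvPolynomial (Fin n) K) {x}).annihilator := by
  set f : MvPolynomial (Fin n) K := monomial (dd ℓ k) 1 with hf
  refine ⟨Pk_isPrime k, Ideal.Quotient.mk _ f, ?_⟩
  ext r
  rw [mem_ann_iff, Submodule.mem_iInf]
  constructor
  · intro hr j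
    by_cases hj : j = k
    · subst hj
      -- r ∈ Pk j, need r * f ∈ Qk ℓ j
      have hPk_le : Pk (K := K) j ≤ (Qk (K := K) ℓ j).colon (Ideal.span {f}) := by
        rw [Pk, Ideal.span_le]
        rintro _ ⟨i, hi, rfl⟩
        rw [SetLike.mem_coe, Ideal.mem_colon_span_singleton]
        exact X_mul_witness_mem hℓ hi
      have := hPk_le hr
      rwa [Ideal.mem_colon_span_singleton] at this
    · exact Ideal.mul_mem_left _ _ (witness_mem hℓ hj)
  · intro hr
    have hrk : r * f ∈ Qk ℓ k := hr k
    by_contra hrP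
    have : f * r ∈ Qk ℓ k ^ 1 := by rwa [pow_one, mul_comm]
    have hfm : f ∈ Qk ℓ k ^ 1 := Qk_pow_primary_step hℓ one_pos this hrP
    rw [pow_one] at hfm
    exact witness_not_mem hℓ k hfm

theorem ass_subset (hℓ : ∀ j, 0 < ℓ j) {p : Ideal (MvPolynomial (Fin n) K)}
    (hp : p.IsPrime ∧ ∃ x : MvPolynomial (Fin n) K ⧸ (⨅ j, Qk (K := K) ℓ j),
      p = (Submodule.span (MvPolynomial (Fin n) K) {x}).annihilator) :
    ∃ k, p = Pk (K := K) k := by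
  obtain ⟨hprime, x, hx⟩ := hp
  obtain ⟨f, rfl⟩ := Ideal.Quotient.mk_surjective x
  set c : Fin n → Ideal (MvPolynomial (Fin n) K) :=
    fun j => (Qk (K := K) ℓ j).colon (Ideal.span {f}) with hc
  have hp_inf : p = ⨅ j, c j := by
    rw [hx]
    ext r
    simp only [mem_ann_iff, hc, Submodule.mem_iInf, Ideal.mem_colon_span_singleton]
  have h2 : Finset.univ.inf c ≤ p := by
    rw [hp_inf]
    exact le_iInf fun j => Finset.inf_le (Finset.mem_univ j)
  obtain ⟨k, _, hk⟩ := (Ideal.IsPrime.inf_le' hprime).mp h2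
  have hpk : p = c k := le_antisymm (hp_inf ▸ iInf_le _ k) hk
  have hfQ : f ∉ Qk (K := K) ℓ k := by
    intro hfQ
    apply hprime.ne_top
    rw [hpk, eq_top_iff]
    intro r _
    rw [hc, Ideal.mem_colon_span_singleton]
    exact Ideal.mul_mem_left _ _ hfQ
  refine ⟨k, le_antisymm ?_ ?_⟩
  · -- p ≤ Pk k
    rw [hpk]
    intro r hrc
    rw [hc, Ideal.mem_colon_span_singleton] at hrc
    by_contra hrP
    have : f * r ∈ Qk ℓ k ^ 1 := by rwa [pow_one, mul_comm]
    exact hfQ (by simpa [pow_one] using Qk_pow_primary_step hℓ one_pos this hrP)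
  · -- Pk k ≤ p
    have hQp : Qk (K := K) ℓ k ≤ p := by
      rw [hpk]
      intro a ha
      rw [hc, Ideal.mem_colon_span_singleton]
      exact Ideal.mul_mem_right _ _ ha
    have := Ideal.radical_mono hQp
    rwa [radical_Qk hℓ k, hprime.radical] at this

end Ass

end SymbAux

/-- In `S = K[x_1,…,x_n]`, let
`Ω = ⋂_{k=1}^n (x_1^{ℓ_1},…,x̂_k^{ℓ_k},…,x_n^{ℓ_n})` and
`Γ = ⋂_{k=1}^n (x_1^{ℓ_1},…,x̂_k^{ℓ_k},…,x_n^{ℓ_n})^m`.  Then `Γ` equals the `m`-th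
symbolic power `Ω^(m)` of `Ω`. -/
theorem gamma_eq_symbolic_power_of_omega
    (K : Type) [Field K] [Infinite K] (n : ℕ) (hn : 2 ≤ n)
    (ℓ : Fin n → ℕ) (hℓ : ∀ j, 0 < ℓ j) (m : ℕ) (hm : 0 < m) :
    (⨅ k : Fin n,
        (Ideal.span ((fun j : Fin n => (X j : MvPolynomial (Fin n) K) ^ ℓ j) ''
          {j | j ≠ k})) ^ m) =
      symbolicPower
        (⨅ k : Fin n,
          Ideal.span ((fun j : Fin n => (X j : MvPolynomial (Fin n) K) ^ ℓ j) '' {j | j ≠ k}))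
        m := by
  show (⨅ k : Fin n, SymbAux.Qk (K := K) ℓ k ^ m)
      = symbolicPower (⨅ k : Fin n, SymbAux.Qk (K := K) ℓ k) m
  unfold symbolicPower
  apply le_antisymm
  · -- Γ ≤ symbolic power
    refine le_iInf fun p => le_iInf fun hp => ?_
    obtain ⟨k, rfl⟩ := SymbAux.ass_subset hℓ hp
    haveI : (SymbAux.Pk (K := K) k).IsPrime := SymbAux.Pk_isPrime k
    have heq := congrArg
      (Ideal.comap (algebraMap (MvPolynomial (Fin n) K)
        (Localization.AtPrime (SymbAux.Pk (K := K) k))))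
      (SymbAux.map_omega_pow (K := K) (k := k) hℓ m)
    exact le_trans (iInf_le _ k) (le_trans Ideal.le_comap_map (le_of_eq heq.symm))
  · -- symbolic power ≤ Γ
    refine le_iInf fun k => ?_
    haveI : (SymbAux.Pk (K := K) k).IsPrime := SymbAux.Pk_isPrime k
    have hPkass := SymbAux.Pk_mem_ass (K := K) hℓ k
    refine le_trans (iInf_le _ (SymbAux.Pk (K := K) k)) (le_trans (iInf_le _ hPkass) ?_)
    refine le_of_eq ?_
    calc Ideal.comap (algebraMap (MvPolynomial (Fin n) K)
            (Localization.AtPrime (SymbAux.Pk (K := K) k)))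
          (Ideal.map (algebraMap (MvPolynomial (Fin n) K)
            (Localization.AtPrime (SymbAux.Pk (K := K) k)))
            ((⨅ j, SymbAux.Qk (K := K) ℓ j) ^ m))
        = Ideal.comap (algebraMap (MvPolynomial (Fin n) K)
            (Localization.AtPrime (SymbAux.Pk (K := K) k)))
          (Ideal.map (algebraMap (MvPolynomial (Fin n) K)
            (Localization.AtPrime (SymbAux.Pk (K := K) k)))
            (SymbAux.Qk (K := K) ℓ k ^ m)) :=
          congrArg (Ideal.comap _) (SymbAux.map_omega_pow hℓ m)
      _ = SymbAux.Qk (K := K) ℓ k ^ m := SymbAux.comap_map_Qk_pow hℓ hm
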